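/- Let b ∈ H₍₁,₂,₂₎ be an odd quaternion. Then there exist units u and u₁ of H₍₁,₂,₂₎ such that b·u − 1 ∈ 2·H₍₁,₂,₂₎ and u₁·b − 1 ∈ 2·H₍₁,₂,₂₎. -/

import Mathlib

open Quaternion

noncomputable section

/-- `v₁ = 1` -/
def v₁ : ℍ[ℝ] := 1

/-- `v₂ = i` -/
def v₂ : ℍ[ℝ] := ⟨0, 1, 0, 0⟩

/-- `v₃ = (1 + i + √2·j)/2` -/
def v₃ : ℍ[ℝ] := ⟨1/2, 1/2, Real.sqrt 2 / 2, 0⟩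

/-- `v₄ = (1 + i + √2·k)/2` -/
def v₄ : ℍ[ℝ] := ⟨1/2, 1/2, 0, Real.sqrt 2 / 2⟩

/-- The quaternion order `H₍₁,₂,₂₎`: the ℤ-span of `{v₁, v₂, v₃, v₄}`. -/
def H122 : Set ℍ[ℝ] :=
  {q | ∃ a b c d : ℤ, q = a • v₁ + b • v₂ + c • v₃ + d • v₄}

/-- A unit of `H₍₁,₂,₂₎`: an element with a two-sided inverse in `H₍₁,₂,₂₎`. -/
def IsUnitH (u : ℍ[ℝ]) : Prop :=
  u ∈ H122 ∧ ∃ v ∈ H122, u * v = 1 ∧ v * u = 1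

set_option maxHeartbeats 1000000

/-- Auxiliary: the general element of `H122` with integer coordinates. -/
def Q (a b c d : ℤ) : ℍ[ℝ] := a • v₁ + b • v₂ + c • v₃ + d • v₄

lemma Q_mem (a b c d : ℤ) : Q a b c d ∈ H122 := ⟨a, b, c, d, rfl⟩

lemma Q_congr {a b c d a' b' c' d' : ℤ} (h1 : a = a') (h2 : b = b') (h3 : c = c')
    (h4 : d = d') : Q a b c d = Q a' b' c' d' := by rw [h1, h2, h3, h4]

lemma sqrt2_sq : Real.sqrt 2 * Real.sqrt 2 = 2 := Real.mul_self_sqrt (by norm_num)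

lemma Q_mul (a₁ b₁ c₁ d₁ a₂ b₂ c₂ d₂ : ℤ) :
    Q a₁ b₁ c₁ d₁ * Q a₂ b₂ c₂ d₂ =
    Q (a₁*a₂ - b₁*b₂ - b₁*c₂ - d₁*b₂ - c₁*c₂ - d₁*c₂ - d₁*d₂)
      (a₁*b₂ + b₁*a₂ + b₁*d₂ + c₁*b₂ + c₁*d₂ - d₁*c₂)
      (a₁*c₂ + c₁*a₂ + d₁*b₂ - b₁*d₂ + c₁*c₂ + d₁*c₂)
      (a₁*d₂ + d₁*a₂ + b₁*c₂ - c₁*b₂ + d₁*c₂ + d₁*d₂) := by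
  have h2 := sqrt2_sq
  ext <;> simp [Q, Quaternion.re_mul, Quaternion.imI_mul,
    Quaternion.imJ_mul, Quaternion.imK_mul] <;> simp [v₁, v₂, v₃, v₄] <;> push_cast
  · linear_combination (-(c₁*c₂+d₁*d₂:ℝ)/4) * h2
  · linear_combination ((c₁*d₂-d₁*c₂:ℝ)/4) * h2
  · ring
  · ring

lemma Q_add (a b c d a' b' c' d' : ℤ) :
    Q a b c d + Q a' b' c' d' = Q (a+a') (b+b') (c+c') (d+d') := by
  simp only [Q, add_smul]; abel

lemma Q_sub (a b c d a' b' c' d' : ℤ) :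
    Q a b c d - Q a' b' c' d' = Q (a-a') (b-b') (c-c') (d-d') := by
  simp only [Q, sub_smul]; abel

lemma Q_one : Q 1 0 0 0 = 1 := by simp [Q, v₁]

lemma Q_intCast (n : ℤ) : (n : ℍ[ℝ]) = Q n 0 0 0 := by simp [Q, v₁]

lemma Q_double (a b c d : ℤ) : Q (a+a) (b+b) (c+c) (d+d) = 2 * Q a b c d := by
  rw [two_mul, Q_add]

lemma Q_star (a b c d : ℤ) :
    star (Q a b c d) = Q (a+c+d) (-b) (-c) (-d) := by
  ext <;> simp [Q] <;> simp [v₁, v₂, v₃, v₄] <;> push_cast <;> ring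

lemma Q_mul_conj (a b c d : ℤ) :
    Q a b c d * Q (a+c+d) (-b) (-c) (-d) =
    Q (a*a + b*b + (a+b)*(c+d) + c*c + d*d + c*d) 0 0 0 := by
  rw [Q_mul]
  exact Q_congr (by ring) (by ring) (by ring) (by ring)

lemma Q_conj_mul (a b c d : ℤ) :
    Q (a+c+d) (-b) (-c) (-d) * Q a b c d =
    Q (a*a + b*b + (a+b)*(c+d) + c*c + d*d + c*d) 0 0 0 := by
  rw [Q_mul]
  exact Q_congr (by ring) (by ring) (by ring) (by ring)

lemma branch (q : ℍ[ℝ]) (a b c d wa wb wc wd : ℤ) (hq : q = Q a b c d)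
    (hN : wa*wa + wb*wb + (wa+wb)*(wc+wd) + wc*wc + wd*wd + wc*wd = 1)
    (h1 : Even (a - wa)) (h2 : Even (b - wb)) (h3 : Even (c - wc)) (h4 : Even (d - wd)) :
    (∃ u : ℍ[ℝ], IsUnitH u ∧ ∃ h ∈ H122, q * u - 1 = 2 * h) ∧
    (∃ u₁ : ℍ[ℝ], IsUnitH u₁ ∧ ∃ h ∈ H122, u₁ * q - 1 = 2 * h) := by
  obtain ⟨a₂, ha₂⟩ := h1
  obtain ⟨b₂, hb₂⟩ := h2
  obtain ⟨c₂, hc₂⟩ := h3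
  obtain ⟨d₂, hd₂⟩ := h4
  have hwu : Q wa wb wc wd * Q (wa+wc+wd) (-wb) (-wc) (-wd) = 1 := by
    rw [Q_mul_conj, hN, Q_one]
  have huw : Q (wa+wc+wd) (-wb) (-wc) (-wd) * Q wa wb wc wd = 1 := by
    rw [Q_conj_mul, hN, Q_one]
  have hunit : IsUnitH (Q (wa+wc+wd) (-wb) (-wc) (-wd)) :=
    ⟨Q_mem _ _ _ _, Q wa wb wc wd, Q_mem _ _ _ _, huw, hwu⟩
  have hdiff : q - Q wa wb wc wd = 2 * Q a₂ b₂ c₂ d₂ := by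
    rw [hq, Q_sub, ← Q_double]
    exact Q_congr ha₂ hb₂ hc₂ hd₂
  constructor
  · refine ⟨Q (wa+wc+wd) (-wb) (-wc) (-wd), hunit,
      Q a₂ b₂ c₂ d₂ * Q (wa+wc+wd) (-wb) (-wc) (-wd), ?_, ?_⟩
    · rw [Q_mul]; exact Q_mem _ _ _ _
    · calc q * Q (wa+wc+wd) (-wb) (-wc) (-wd) - 1
          = (q - Q wa wb wc wd) * Q (wa+wc+wd) (-wb) (-wc) (-wd)
            + (Q wa wb wc wd * Q (wa+wc+wd) (-wb) (-wc) (-wd) - 1) := by noncomm_ring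
        _ = 2 * (Q a₂ b₂ c₂ d₂ * Q (wa+wc+wd) (-wb) (-wc) (-wd)) := by
            rw [hdiff, hwu]; noncomm_ring
  · refine ⟨Q (wa+wc+wd) (-wb) (-wc) (-wd), hunit,
      Q (wa+wc+wd) (-wb) (-wc) (-wd) * Q a₂ b₂ c₂ d₂, ?_, ?_⟩
    · rw [Q_mul]; exact Q_mem _ _ _ _
    · calc Q (wa+wc+wd) (-wb) (-wc) (-wd) * q - 1
          = Q (wa+wc+wd) (-wb) (-wc) (-wd) * (q - Q wa wb wc wd)
            + (Q (wa+wc+wd) (-wb) (-wc) (-wd) * Q wa wb wc wd - 1) := by noncomm_ring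
        _ = 2 * (Q (wa+wc+wd) (-wb) (-wc) (-wd) * Q a₂ b₂ c₂ d₂) := by
            rw [hdiff, huw]; noncomm_ring

/-- For an odd quaternion `b ∈ H₍₁,₂,₂₎` there are units `u, u₁` of `H₍₁,₂,₂₎` with
`b·u ≡ 1 (mod 2)` and `u₁·b ≡ 1 (mod 2)` in `H₍₁,₂,₂₎`. -/
theorem odd_quaternion_unit_congruence (b : ℍ[ℝ]) (hb : b ∈ H122)
    (hodd : ∃ n : ℤ, Odd n ∧ b * star b = (n : ℍ[ℝ])) :
    (∃ u : ℍ[ℝ], IsUnitH u ∧ ∃ h ∈ H122, b * u - 1 = 2 * h) ∧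
    (∃ u₁ : ℍ[ℝ], IsUnitH u₁ ∧ ∃ h ∈ H122, u₁ * b - 1 = 2 * h) := by
  obtain ⟨a, b', c, d, hq⟩ := hb
  have hq' : b = Q a b' c d := hq
  obtain ⟨n, hn, hbs⟩ := hodd
  have hnormq : b * star b = Q (a*a + b'*b' + (a+b')*(c+d) + c*c + d*d + c*d) 0 0 0 := by
    rw [hq', Q_star, Q_mul_conj]
  have hcast : ((a*a + b'*b' + (a+b')*(c+d) + c*c + d*d + c*d : ℤ) : ℍ[ℝ]) = (n : ℍ[ℝ]) := by
    rw [Q_intCast, ← hnormq, hbs]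
  have hNn : a*a + b'*b' + (a+b')*(c+d) + c*c + d*d + c*d = n := by
    have h := congrArg QuaternionAlgebra.re hcast
    push_cast at h
    exact_mod_cast h
  have hNodd : Odd (a*a + b'*b' + (a+b')*(c+d) + c*c + d*d + c*d) := hNn ▸ hn
  obtain ⟨ka, hka⟩ := Int.even_or_odd' a
  obtain ⟨kb, hkb⟩ := Int.even_or_odd' b'
  obtain ⟨kc, hkc⟩ := Int.even_or_odd' c
  obtain ⟨kd, hkd⟩ := Int.even_or_odd' d
  rcases hka with rfl | rfl <;> rcases hkb with rfl | rfl <;>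
    rcases hkc with rfl | rfl <;> rcases hkd with rfl | rfl
  -- (E,E,E,E): contradiction
  · exact absurd hNodd (Int.not_odd_iff_even.mpr
      ⟨2*ka*ka + 2*kb*kb + 2*(ka+kb)*(kc+kd) + 2*kc*kc + 2*kd*kd + 2*kc*kd, by ring⟩)
  -- (E,E,E,O): w = (0,0,0,1)
  · exact branch b _ _ _ _ 0 0 0 1 hq' (by norm_num)
      ⟨ka, by ring⟩ ⟨kb, by ring⟩ ⟨kc, by ring⟩ ⟨kd, by ring⟩
  -- (E,E,O,E): w = (0,0,1,0)
  · exact branch b _ _ _ _ 0 0 1 0 hq' (by norm_num)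
      ⟨ka, by ring⟩ ⟨kb, by ring⟩ ⟨kc, by ring⟩ ⟨kd, by ring⟩
  -- (E,E,O,O): w = (0,0,1,-1)
  · exact branch b _ _ _ _ 0 0 1 (-1) hq' (by norm_num)
      ⟨ka, by ring⟩ ⟨kb, by ring⟩ ⟨kc, by ring⟩ ⟨kd+1, by ring⟩
  -- (E,O,E,E): w = (0,1,0,0)
  · exact branch b _ _ _ _ 0 1 0 0 hq' (by norm_num)
      ⟨ka, by ring⟩ ⟨kb, by ring⟩ ⟨kc, by ring⟩ ⟨kd, by ring⟩
  -- (E,O,E,O): w = (0,1,0,-1)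
  · exact branch b _ _ _ _ 0 1 0 (-1) hq' (by norm_num)
      ⟨ka, by ring⟩ ⟨kb, by ring⟩ ⟨kc, by ring⟩ ⟨kd+1, by ring⟩
  -- (E,O,O,E): w = (0,1,-1,0)
  · exact branch b _ _ _ _ 0 1 (-1) 0 hq' (by norm_num)
      ⟨ka, by ring⟩ ⟨kb, by ring⟩ ⟨kc+1, by ring⟩ ⟨kd, by ring⟩
  -- (E,O,O,O): contradiction
  · exact absurd hNodd (Int.not_odd_iff_even.mpr
      ⟨2*ka*ka + 2*kb*kb + 2*kb + 2 + (2*ka+2*kb+1)*(kc+kd+1)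
        + 2*kc*kc + 2*kc + 2*kd*kd + 2*kd + 2*kc*kd + kc + kd, by ring⟩)
  -- (O,E,E,E): w = (1,0,0,0)
  · exact branch b _ _ _ _ 1 0 0 0 hq' (by norm_num)
      ⟨ka, by ring⟩ ⟨kb, by ring⟩ ⟨kc, by ring⟩ ⟨kd, by ring⟩
  -- (O,E,E,O): w = (1,0,0,-1)
  · exact branch b _ _ _ _ 1 0 0 (-1) hq' (by norm_num)
      ⟨ka, by ring⟩ ⟨kb, by ring⟩ ⟨kc, by ring⟩ ⟨kd+1, by ring⟩
  -- (O,E,O,E): w = (1,0,-1,0)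
  · exact branch b _ _ _ _ 1 0 (-1) 0 hq' (by norm_num)
      ⟨ka, by ring⟩ ⟨kb, by ring⟩ ⟨kc+1, by ring⟩ ⟨kd, by ring⟩
  -- (O,E,O,O): contradiction
  · exact absurd hNodd (Int.not_odd_iff_even.mpr
      ⟨2*ka*ka + 2*ka + 2 + 2*kb*kb + (2*ka+2*kb+1)*(kc+kd+1)
        + 2*kc*kc + 2*kc + 2*kd*kd + 2*kd + 2*kc*kd + kc + kd, by ring⟩)
  -- (O,O,E,E): contradiction
  · exact absurd hNodd (Int.not_odd_iff_even.mpr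
      ⟨2*ka*ka + 2*ka + 2*kb*kb + 2*kb + 1 + (2*ka+2*kb+2)*(kc+kd)
        + 2*kc*kc + 2*kd*kd + 2*kc*kd, by ring⟩)
  -- (O,O,E,O): w = (1,1,0,-1)
  · exact branch b _ _ _ _ 1 1 0 (-1) hq' (by norm_num)
      ⟨ka, by ring⟩ ⟨kb, by ring⟩ ⟨kc, by ring⟩ ⟨kd+1, by ring⟩
  -- (O,O,O,E): w = (1,1,-1,0)
  · exact branch b _ _ _ _ 1 1 (-1) 0 hq' (by norm_num)
      ⟨ka, by ring⟩ ⟨kb, by ring⟩ ⟨kc+1, by ring⟩ ⟨kd, by ring⟩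
  -- (O,O,O,O): w = (1,1,-1,-1)
  · exact branch b _ _ _ _ 1 1 (-1) (-1) hq' (by norm_num)
      ⟨ka, by ring⟩ ⟨kb, by ring⟩ ⟨kc+1, by ring⟩ ⟨kd+1, by ring⟩
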